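/- Let G be an infinite group and S ⊆ G a finite generating set closed under inverses, equipped with a fixed linear order on S. Then there exists an infinite set R of super-reduced words over S such that: (1) R is closed under taking prefixes; (2) distinct words in R represent distinct elements of G (the evaluation map from R to G sending a word to the product of its letters is injective); and (3) the lexicographic order restricted to R is a well-order in which every element has only finitely many predecessors (i.e., it is order-isomorphic to ℕ). -/

import Mathlib

def SuperReduced {G : Type*} [Group G] (w : List G) : Prop :=
  ∀ i j : ℕ, i ≤ j → j < w.length → ((w.drop i).take (j + 1 - i)).prod ≠ 1

section Aux
variable {G : Type*} [Group G]

lemma SuperReduced.of_prefix {l l' : List G} (h : l <+: l') (hs : SuperReduced l') :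
    SuperReduced l := by
  intro i j hij hj
  obtain ⟨t, rfl⟩ := h
  have hi : i ≤ l.length := le_of_lt (lt_of_le_of_lt hij hj)
  have h1 : (l ++ t).drop i = l.drop i ++ t := List.drop_append_of_le_length hi
  have h2 : (l.drop i ++ t).take (j + 1 - i) = (l.drop i).take (j + 1 - i) :=
    List.take_append_of_le_length (by rw [List.length_drop]; omega)
  have := hs i j hij (by rw [List.length_append]; omega)
  rwa [h1, h2] at this

lemma exists_superReduced_len [Infinite G] (S : Set G) (hS : S.Finite)
    (hgen : Subgroup.closure S = ⊤) (hinv : ∀ s ∈ S, s⁻¹ ∈ S) (n : ℕ) :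
    ∃ w : List G, (∀ x ∈ w, x ∈ S) ∧ w.length = n ∧ SuperReduced w := by
  classical
  have hfin : Finite ↥S := hS.to_subtype
  -- every element is a product of a word over S
  have hg : ∀ g : G, ∃ l : List G, (∀ x ∈ l, x ∈ S) ∧ l.prod = g := by
    intro g
    have hsub : S⁻¹ ⊆ S := by
      intro x hx
      have := hinv x⁻¹ (by simpa [Set.mem_inv] using hx)
      simpa using this
    have hU : S ∪ S⁻¹ = S := Set.union_eq_self_of_subset_right hsub
    have : g ∈ Submonoid.closure S := by
      have : g ∈ (Subgroup.closure S).toSubmonoid := by rw [hgen]; trivial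
      rwa [Subgroup.closure_toSubmonoid, hU] at this
    exact Submonoid.exists_list_of_mem_closure this
  -- the ball of radius n is finite
  have hBfin : ((fun l : List ↥S => (l.map Subtype.val).prod) ''
      {l : List ↥S | l.length ≤ n}).Finite :=
    Set.Finite.image _ (List.finite_length_le ↥S n)
  obtain ⟨g, hgB⟩ := (Set.Finite.infinite_compl hBfin).nonempty
  -- minimal length word for g
  have hP : ∃ k, ∃ l : List G, (∀ x ∈ l, x ∈ S) ∧ l.length = k ∧ l.prod = g := by
    obtain ⟨l, hl, hlp⟩ := hg g
    exact ⟨l.length, l, hl, rfl, hlp⟩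
  obtain ⟨w, hwS, hwlen, hwp⟩ := Nat.find_spec hP
  have hmin : ∀ l : List G, (∀ x ∈ l, x ∈ S) → l.prod = g → w.length ≤ l.length := by
    intro l hl hlp
    rw [hwlen]
    exact Nat.find_le ⟨l, hl, rfl, hlp⟩
  -- w is super-reduced
  have hsr : SuperReduced w := by
    intro i j hij hj hone
    set w' : List G := w.take i ++ w.drop (j + 1) with hw'
    have hdecomp : w = w.take i ++ ((w.drop i).take (j + 1 - i) ++ w.drop (j + 1)) := by
      conv_lhs => rw [← List.take_append_drop i w]
      congr 1
      conv_lhs => rw [← List.take_append_drop (j + 1 - i) (w.drop i)]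
      congr 1
      rw [List.drop_drop]
      congr 1
      omega
    have hprod : w'.prod = g := by
      have : w.prod = (w.take i).prod * (((w.drop i).take (j + 1 - i)).prod *
          (w.drop (j + 1)).prod) := by
        conv_lhs => rw [hdecomp]
        rw [List.prod_append, List.prod_append]
      rw [hone, one_mul] at this
      rw [hw', List.prod_append, ← this, hwp]
    have hS' : ∀ x ∈ w', x ∈ S := by
      intro x hx
      rw [hw', List.mem_append] at hx
      rcases hx with hx | hx
      · exact hwS x (List.take_subset _ _ hx)
      · exact hwS x (List.drop_subset _ _ hx)
    have hlen : w'.length < w.length := by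
      rw [hw', List.length_append, List.length_take, List.length_drop]
      omega
    exact absurd (hmin w' hS' hprod) (by omega)
  -- w is long
  have hlong : n ≤ w.length := by
    by_contra h
    push_neg at h
    apply hgB
    refine ⟨w.attach.map (fun x => ⟨x.1, hwS x.1 x.2⟩), ?_, ?_⟩
    · simp only [Set.mem_setOf_eq, List.length_map, List.length_attach]
      omega
    · simp only [List.map_map]
      rw [show (Subtype.val ∘ fun x : {x // x ∈ w} => (⟨x.1, hwS x.1 x.2⟩ : ↥S)) =
        (fun x : {x // x ∈ w} => x.1) from rfl]
      rw [List.attach_map_subtype_val, hwp]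
  refine ⟨w.take n, fun x hx => hwS x (List.take_subset _ _ hx), ?_, ?_⟩
  · rw [List.length_take]; omega
  · exact SuperReduced.of_prefix (List.take_prefix _ _) hsr

lemma lex_append {α : Type*} (r : α → α → Prop) (l t : List α) (ht : t ≠ []) :
    List.Lex r l (l ++ t) := by
  induction l with
  | nil =>
    cases t with
    | nil => exact absurd rfl ht
    | cons a t => exact List.Lex.nil
  | cons a l ih => exact List.Lex.cons ih

end Aux
theorem exists_wellOrdered_superReduced_tree {G : Type*} [Group G] [Infinite G]
    (S : Set G) (hS : S.Finite) (hgen : Subgroup.closure S = ⊤)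
    (hinv : ∀ s ∈ S, s⁻¹ ∈ S) [LinearOrder ↥S] :
    ∃ R : Set (List ↥S), R.Infinite ∧
      (∀ w ∈ R, SuperReduced (w.map (Subtype.val : ↥S → G))) ∧
      (∀ w ∈ R, ∀ v : List ↥S, v <+: w → v ∈ R) ∧
      Set.InjOn (fun w : List ↥S => (w.map (Subtype.val : ↥S → G)).prod) R ∧
      Nonempty
        ((fun v w : ↥R => List.Lex (· < ·) (v : List ↥S) (w : List ↥S)) ≃r
          ((· < ·) : ℕ → ℕ → Prop)) := by
  classical
  have hfin : Finite ↥S := hS.to_subtype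
  set T : Set (List ↥S) := {w | SuperReduced (w.map Subtype.val)} with hT
  -- T is prefix-closed
  have hTpre : ∀ w ∈ T, ∀ v : List ↥S, v <+: w → v ∈ T := by
    intro w hw v hv
    exact SuperReduced.of_prefix (hv.map Subtype.val) hw
  -- T has words of every length
  have hTlen : ∀ n, ∃ w ∈ T, w.length = n := by
    intro n
    obtain ⟨w, hwS, hwlen, hsr⟩ := exists_superReduced_len S hS hgen hinv n
    refine ⟨w.attach.map (fun x => ⟨x.1, hwS x.1 x.2⟩), ?_, by simp [hwlen]⟩
    have hmap : (w.attach.map (fun x => (⟨x.1, hwS x.1 x.2⟩ : ↥S))).map Subtype.val = w := by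
      simp only [List.map_map]
      rw [show (Subtype.val ∘ fun x : {x // x ∈ w} => (⟨x.1, hwS x.1 x.2⟩ : ↥S)) =
        (fun x : {x // x ∈ w} => x.1) from rfl]
      exact List.attach_map_subtype_val w
    show SuperReduced _
    rw [hmap]
    exact hsr
  -- extendability predicate
  set E : List ↥S → Prop := fun w => {w' ∈ T | w <+: w'}.Infinite with hE
  have hE0 : E [] := by
    have : {w' ∈ T | [] <+: w'} = T := by
      ext w'; simp
    rw [hE]
    simp only [this]
    exact Set.infinite_of_injective_forall_mem (f := fun n => (hTlen n).choose)
      (fun m n hmn => by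
        have hm := (hTlen m).choose_spec.2
        have hn := (hTlen n).choose_spec.2
        have h2 : (hTlen m).choose = (hTlen n).choose := hmn
        rw [← hm, ← hn, h2])
      (fun n => (hTlen n).choose_spec.1)
  have hstep : ∀ w, E w → ∃ s : ↥S, E (w ++ [s]) := by
    intro w hw
    by_contra h
    push_neg at h
    apply hw
    have hsub : {w' ∈ T | w <+: w'} ⊆
        {w} ∪ ⋃ s : ↥S, {w' ∈ T | w ++ [s] <+: w'} := by
      rintro w' ⟨hw', hpre⟩
      rcases eq_or_ne w' w with rfl | hne
      · exact Or.inl rfl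
      · right
        obtain ⟨t, rfl⟩ := hpre
        cases t with
        | nil => simp at hne
        | cons s t =>
          exact Set.mem_iUnion.2 ⟨s, hw', ⟨t, by simp⟩⟩
    refine Set.Finite.subset ?_ hsub
    refine (Set.finite_singleton w).union (Set.finite_iUnion fun s => ?_)
    exact Set.not_infinite.mp (fun hi => h s hi)
  have hET : ∀ w, E w → w ∈ T := by
    intro w hw
    obtain ⟨w', hw'⟩ := hw.nonempty
    exact hTpre w' hw'.1 w hw'.2
  -- build the branch
  let F : ℕ → {w : List ↥S // E w} := fun n =>
    Nat.rec ⟨[], hE0⟩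
      (fun _ p => ⟨p.1 ++ [(hstep p.1 p.2).choose], (hstep p.1 p.2).choose_spec⟩) n
  have hFsucc : ∀ n, ∃ s : ↥S, (F (n + 1)).1 = (F n).1 ++ [s] := fun n => ⟨_, rfl⟩
  have hFlen : ∀ n, (F n).1.length = n := by
    intro n
    induction n with
    | zero => rfl
    | succ n ih =>
      obtain ⟨s, hs⟩ := hFsucc n
      rw [hs, List.length_append, ih]
      rfl
  have hFinj : Function.Injective (fun n => (F n).1) := by
    intro m n hmn
    have h2 : (F m).1 = (F n).1 := hmn
    have := hFlen m
    rw [h2, hFlen n] at this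
    exact this.symm
  have hchain : ∀ m n, m ≤ n → (F m).1 <+: (F n).1 := by
    intro m n hmn
    induction n, hmn using Nat.le_induction with
    | base => exact List.prefix_rfl
    | succ n hmn ih =>
      obtain ⟨s, hs⟩ := hFsucc n
      rw [hs]
      exact ih.trans (List.prefix_append _ _)
  have hFT : ∀ n, (F n).1 ∈ T := fun n => hET _ (F n).2
  refine ⟨Set.range (fun n => (F n).1), ?_, ?_, ?_, ?_, ?_⟩
  · exact Set.infinite_range_of_injective hFinj
  · rintro w ⟨n, rfl⟩
    exact hFT n
  · rintro w ⟨n, rfl⟩ v hv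
    have hvlen : v.length ≤ n := by
      have := hv.length_le
      rwa [hFlen n] at this
    refine ⟨v.length, ?_⟩
    have h1 : (F v.length).1 <+: (F n).1 := hchain _ _ hvlen
    have h2 : (F v.length).1 <+: v ∨ v <+: (F v.length).1 :=
      List.prefix_or_prefix_of_prefix h1 hv
    have hlen : (F v.length).1.length = v.length := hFlen _
    rcases h2 with h2 | h2
    · exact h2.eq_of_length hlen
    · exact (h2.eq_of_length hlen.symm).symm
  · rintro w ⟨m, rfl⟩ v ⟨n, rfl⟩ hprod
    simp only at hprod
    -- wlog m ≤ n
    have key : ∀ m n : ℕ, m ≤ n →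
        ((F m).1.map Subtype.val).prod = ((F n).1.map Subtype.val).prod →
        (F m).1 = (F n).1 := by
      intro m n hmn hp
      obtain ⟨t, ht⟩ := hchain m n hmn
      cases t with
      | nil => rw [← ht, List.append_nil]
      | cons s t =>
        exfalso
        have hmn' : m < n := by
          have := hFlen n
          rw [← ht, List.length_append, hFlen m] at this
          simp at this
          omega
        have hsr := hFT n
        have hdrop : ((F n).1.map Subtype.val).drop m = (s :: t).map Subtype.val := by
          rw [← ht, List.map_append]
          exact List.drop_left' (by rw [List.length_map, hFlen])
        have hlen' : ((s :: t).map Subtype.val).length = n - m := by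
          have := hFlen n
          rw [← ht, List.length_append, hFlen m] at this
          rw [List.length_map]
          omega
        have hone : ((s :: t).map Subtype.val).prod = 1 := by
          have : ((F n).1.map Subtype.val).prod
              = ((F m).1.map Subtype.val).prod * ((s :: t).map Subtype.val).prod := by
            rw [← ht, List.map_append, List.prod_append]
          rw [← hp, left_eq_mul] at this
          exact this
        have := hsr m (n - 1) (by omega) (by rw [List.length_map, hFlen]; omega)
        apply this
        rw [hdrop]
        rw [show n - 1 + 1 - m = n - m by omega]
        rw [← hlen', List.take_length]
        exact hone
    rcases le_total m n with hmn | hmn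
    · exact key m n hmn hprod
    · exact (key n m hmn hprod.symm).symm
  · -- order isomorphism
    have hlex : ∀ m n : ℕ, m < n → List.Lex (· < ·) (F m).1 (F n).1 := by
      intro m n hmn
      obtain ⟨t, ht⟩ := hchain m n (le_of_lt hmn)
      have htne : t ≠ [] := by
        rintro rfl
        rw [List.append_nil] at ht
        exact absurd (hFinj ht) (Nat.ne_of_lt hmn)
      rw [← ht]
      exact lex_append _ _ _ htne
    have hnotlex : ∀ m n : ℕ, n ≤ m → ¬ List.Lex (· < ·) (F m).1 (F n).1 := by
      intro m n hnm h
      rcases eq_or_lt_of_le hnm with rfl | hlt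
      · exact (List.Lex.asymm (· < ·)).asymm _ _ h h
      · exact (List.Lex.asymm (· < ·)).asymm _ _ h (hlex n m hlt)
    set R : Set (List ↥S) := Set.range (fun n => (F n).1) with hR
    have hbij : Function.Bijective (fun n => (⟨(F n).1, ⟨n, rfl⟩⟩ : ↥R)) := by
      constructor
      · intro m n hmn
        have h2 : (⟨(F m).1, ⟨m, rfl⟩⟩ : ↥R) = ⟨(F n).1, ⟨n, rfl⟩⟩ := hmn
        exact hFinj (congrArg (fun x : ↥R => (x : List ↥S)) h2)
      · rintro ⟨w, n, rfl⟩
        exact ⟨n, rfl⟩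
    let e : ℕ ≃ ↥R := Equiv.ofBijective _ hbij
    have he : ∀ n, ((e n : ↥R) : List ↥S) = (F n).1 := fun n => rfl
    refine ⟨RelIso.symm ⟨e, ?_⟩⟩
    intro m n
    simp only [he]
    constructor
    · intro h
      by_contra hc
      push_neg at hc
      exact hnotlex m n hc h
    · exact hlex m n
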